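/- arXiv:1512.01483 — 2 statements merged into one kernel-verified Lean document; each statement's English description precedes it below -/
import Mathlib

section
/- The modular presweep map presweep_m : A → A* is injective, and the map inverse_presweep_m (Algorithm 2) satisfies inverse_presweep_m ∘ presweep_m = id on A. -/
/-- Modular level of the `j`-th letter (0-indexed) of `w`: sum of the first `j+1` letters in `Fin m`. -/
def modLevel (m : ℕ) [NeZero m] (w : List (Fin m)) (j : ℕ) : Fin m :=
  (w.take (j+1)).sum

/-- The modular sweep map: for k = m-1,…,0, read `w` right-to-left and append letters of level k. -/
def msweep (m : ℕ) [NeZero m] (w : List (Fin m)) : List (Fin m) :=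
  ((List.range m).reverse).flatMap (fun k =>
    ((List.range w.length).reverse).filterMap (fun j =>
      if (modLevel m w j : ℕ) = k then some (w.getD j 0) else none))

/-- The modular presweep map: block `k` consists of the letters of level `k`, read right-to-left. -/
def presweep (m : ℕ) [NeZero m] (w : List (Fin m)) (k : Fin m) : List (Fin m) :=
  ((List.range w.length).reverse).filterMap (fun j =>
    if modLevel m w j = k then some (w.getD j 0) else none)

/-- The forgetful map: concatenate the blocks u*_{m-1} | … | u*_0. -/
def forget {m : ℕ} (P : Fin m → List (Fin m)) : List (Fin m) :=
  (List.finRange m).reverse.flatMap P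

/-- One pass of the inverse modular presweep algorithm, returning the removed letters
in removal order (i.e. w_N, w_{N-1}, …), or `none` upon hitting an empty block. -/
def invPresweepAux {m : ℕ} [NeZero m] :
    ℕ → (Fin m → List (Fin m)) → Fin m → Option (List (Fin m))
  | 0, _, _ => some []
  | n+1, P, l =>
    match P l with
    | [] => none
    | a :: rest => (invPresweepAux n (Function.update P l rest) (l - a)).map (fun ws => a :: ws)

/-- The inverse modular presweep map (Algorithm 2): starts at level |u| mod m. -/
def invPresweep {m : ℕ} [NeZero m] (N : ℕ) (P : Fin m → List (Fin m)) :
    Option (List (Fin m)) :=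
  (invPresweepAux N P ((forget P).sum)).map List.reverse

/-- The presweepResidual partitioned word left over when the inverse presweep algorithm stops. -/
def presweepResidual {m : ℕ} [NeZero m] :
    ℕ → (Fin m → List (Fin m)) → Fin m → (Fin m → List (Fin m))
  | 0, P, _ => P
  | n+1, P, l =>
    match P l with
    | [] => P
    | a :: rest => presweepResidual n (Function.update P l rest) (l - a)

/-- Sum of all letters of a partitioned word, as a natural number. -/
def totalSum {m : ℕ} (P : Fin m → List (Fin m)) : ℕ :=
  ∑ k : Fin m, ((P k).map Fin.val).sum

/-- Number of filled cells in column `j` of the balancing array: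
cell (letter a in block k, column j) is filled iff j ∈ {k, k+1, …, k+a-1} mod m. -/
def colCount {m : ℕ} [NeZero m] (P : Fin m → List (Fin m)) (j : Fin m) : ℕ :=
  ∑ k : Fin m, ((P k).filter (fun a => decide (((j - k : Fin m) : ℕ) < (a : ℕ)))).length

/-- The equitable number of filled cells for column `j`. -/
def eqCount {m : ℕ} [NeZero m] (P : Fin m → List (Fin m)) (j : Fin m) : ℕ :=
  if 1 ≤ (j : ℕ) ∧ (j : ℕ) ≤ totalSum P % m then totalSum P / m + 1 else totalSum P / m

/-- A partitioned word is equitable if every column of its balancing array is equitably filled. -/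
def Equitable {m : ℕ} [NeZero m] (P : Fin m → List (Fin m)) : Prop :=
  ∀ j : Fin m, colCount P j = eqCount P j

/-- The list recording, for each position of `forget P`, the index of the block containing it. -/
def blockList {m : ℕ} (P : Fin m → List (Fin m)) : List (Fin m) :=
  (List.finRange m).reverse.flatMap (fun k => (P k).map (fun _ => k))

/-- The index of the block containing the `i`-th letter (0-indexed) of `forget P`. -/
def blockIdx {m : ℕ} [NeZero m] (P : Fin m → List (Fin m)) (i : ℕ) : ℕ :=
  (((blockList P).getD i 0 : Fin m) : ℕ)

/-- A balanced block-suffix of `P`: a suffix of each block, with letter sum ≡ 0 mod m. -/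
def IsBBS {m : ℕ} [NeZero m] (P S : Fin m → List (Fin m)) : Prop :=
  (∀ k, S k <:+ P k) ∧ totalSum S % m = 0

/-- A left balanced block-suffix: a balanced block-suffix with empty rightmost block. -/
def IsLeftBBS {m : ℕ} [NeZero m] (P S : Fin m → List (Fin m)) : Prop :=
  IsBBS P S ∧ S 0 = []

/-- A minimal left balanced block-suffix: nonempty, and its intersection with any balanced
block-suffix is itself or empty. -/
def MinLeftBBS {m : ℕ} [NeZero m] (P S : Fin m → List (Fin m)) : Prop :=
  IsLeftBBS P S ∧ (∃ k, S k ≠ []) ∧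
  ∀ T, IsBBS P T → (∀ k, S k <:+ T k) ∨ (∀ k, S k = [] ∨ T k = [])

/-- Shift the letters of a left balanced block-suffix `S` of `P` one block to the right
(from block k to block k-1). -/
def shiftBy {m : ℕ} [NeZero m] (P S : Fin m → List (Fin m)) : Fin m → List (Fin m) :=
  fun k => S (k + 1) ++ (P k).take ((P k).length - (S k).length)

/-- One step of the rightmost-partition algorithm (Algorithm 4): with `j` the rightmost
(= smallest-index) column less than equitably filled, move the leftmost letter of block `j-1`
to the end of block `j`. -/
def stepR {m : ℕ} [NeZero m] (P Q : Fin m → List (Fin m)) : Prop :=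
  ∃ j : Fin m, colCount P j < eqCount P j ∧
    (∀ j' : Fin m, j' < j → eqCount P j' ≤ colCount P j') ∧
    Q = fun k => if k = j then P j ++ (P (j-1)).take 1
         else if k = j - 1 then (P (j-1)).tail else P k

/-- One step of the leftmost-partition algorithm (Algorithm 5): with `j` the leftmost
(= largest-index) column more than equitably filled, move the rightmost letter of block `j`
to the front of block `j-1`. -/
def stepL {m : ℕ} [NeZero m] (P Q : Fin m → List (Fin m)) : Prop :=
  ∃ j : Fin m, eqCount P j < colCount P j ∧
    (∀ j' : Fin m, j < j' → colCount P j' ≤ eqCount P j') ∧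
    Q = fun k => if k = j then (P j).dropLast
         else if k = j - 1 then (P j).drop ((P j).length - 1) ++ P k else P k

/-- The sum of all letters of a partitioned word in `Fin m`, i.e. |u| mod m. -/
def totalSumFin {m : ℕ} [NeZero m] (P : Fin m → List (Fin m)) : Fin m :=
  ∑ k : Fin m, (P k).sum

/-- Prepend the letter `i` to block `i + |u|_m` of `P`. -/
def addLetter {m : ℕ} [NeZero m] (P : Fin m → List (Fin m)) (i : Fin m) :
    Fin m → List (Fin m) :=
  fun k => if k = i + totalSumFin P then i :: P k else P k

/-- The n-th level of the complete m-ary tree T*_m of partitioned words. -/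
def TreeLevel (m : ℕ) [NeZero m] : ℕ → Set (Fin m → List (Fin m))
  | 0 => {fun _ => []}
  | n+1 => {Q | ∃ P ∈ TreeLevel m n, ∃ i : Fin m, Q = addLetter P i}

/-- The (integer) level of the `j`-th letter (0-indexed) of a word over ℤ. -/
def zlevel (w : List ℤ) (j : ℕ) : ℤ :=
  (w.take (j+1)).sum

/-- The sequence of levels swept: k = -1, -2, …, then …, 2, 1, 0. -/
def sweepKeys (w : List ℤ) : List ℤ :=
  ((List.range ((w.map Int.natAbs).sum)).map (fun t => -((t : ℤ)+1))) ++
  ((List.range ((w.map Int.natAbs).sum + 1)).reverse.map (fun t => (t : ℤ)))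

/-- The sweep map on words over ℤ. -/
def zsweep (w : List ℤ) : List ℤ :=
  (sweepKeys w).flatMap (fun k =>
    ((List.range w.length).reverse).filterMap (fun j =>
      if zlevel w j = k then some (w.getD j 0) else none))

/-- The set A_ℤ of words containing exactly `e j` copies of `a j` for each `j`. -/
def AZ (n : ℕ) (a : Fin n → ℤ) (e : Fin n → ℕ) : Set (List ℤ) :=
  {w | (w : Multiset ℤ) = ∑ j : Fin n, Multiset.replicate (e j) (a j)}

/-- The set A_ℕ of Dyck words: words of A_ℤ with all levels nonnegative. -/
def ANset (n : ℕ) (a : Fin n → ℤ) (e : Fin n → ℕ) : Set (List ℤ) :=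
  {w | w ∈ AZ n a e ∧ ∀ j < w.length, 0 ≤ zlevel w j}

/-- The sequence of levels for the zeta map: k = 0, 1, 2, …, then …, -3, -2, -1. -/
def zetaKeys (w : List ℤ) : List ℤ :=
  ((List.range ((w.map Int.natAbs).sum + 1)).map (fun t => (t : ℤ))) ++
  ((List.range ((w.map Int.natAbs).sum)).reverse.map (fun t => -((t : ℤ)+1)))

/-- The zeta map: sort the letters of `w` by level, reading left-to-right, for
k = 0,1,2,… and then k = …,-3,-2,-1. -/
def zeta (w : List ℤ) : List ℤ :=
  (zetaKeys w).flatMap (fun k =>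
    (List.range w.length).filterMap (fun j =>
      if zlevel w j = k then some (w.getD j 0) else none))

/-- The set of rational Dyck words: -b copies of a, a copies of b, all partial sums ≥ 0. -/
def Dab (a b : ℤ) : Set (List ℤ) :=
  {w | (w : Multiset ℤ) = Multiset.replicate (-b).toNat a + Multiset.replicate a.toNat b ∧
       ∀ j < w.length, 0 ≤ zlevel w j}

lemma presweep_append (m : ℕ) [NeZero m] (v : List (Fin m)) (a : Fin m) (k : Fin m) :
    presweep m (v ++ [a]) k =
      (if v.sum + a = k then [a] else []) ++ presweep m v k := by
  unfold presweep
  rw [List.length_append, List.length_singleton, List.range_succ, List.reverse_append]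
  simp only [List.reverse_singleton, List.singleton_append, List.filterMap_cons]
  have h1 : modLevel m (v ++ [a]) v.length = v.sum + a := by
    unfold modLevel
    rw [List.take_of_length_le (by simp)]
    simp
  have h2 : (v ++ [a]).getD v.length 0 = a := by
    simp [List.getD, List.getElem?_append_right]
  rw [h1, h2]
  have h3 : ∀ j ∈ (List.range v.length).reverse,
      (if modLevel m (v ++ [a]) j = k then some ((v ++ [a]).getD j 0) else none)
      = (if modLevel m v j = k then some (v.getD j 0) else none) := by
    intro j hj
    rw [List.mem_reverse, List.mem_range] at hj
    have hl : modLevel m (v ++ [a]) j = modLevel m v j := by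
      unfold modLevel
      rw [List.take_append_of_le_length (by omega)]
    have hg : (v ++ [a]).getD j 0 = v.getD j 0 := by
      simp [List.getD, List.getElem?_append_left hj]
    rw [hl, hg]
  rw [List.filterMap_congr h3]
  by_cases h : v.sum + a = k <;> simp [h]

lemma forget_sum {m : ℕ} [NeZero m] (P : Fin m → List (Fin m)) :
    (forget P).sum = ∑ k : Fin m, (P k).sum := by
  unfold forget
  rw [List.flatMap_def, List.sum_flatten, List.map_reverse, List.map_reverse,
    List.sum_reverse, List.map_map, ← Fin.sum_univ_def]
  rfl

lemma presweep_blocks_sum (m : ℕ) [NeZero m] (w : List (Fin m)) :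
    ∑ k : Fin m, (presweep m w k).sum = w.sum := by
  induction w using List.reverseRecOn with
  | nil => simp [presweep]
  | append_singleton v a ih =>
    simp only [presweep_append, List.sum_append]
    rw [Finset.sum_add_distrib, ih]
    have : ∑ x : Fin m, (if v.sum + a = x then [a] else ([] : List (Fin m))).sum = a := by
      simp [apply_ite List.sum, Finset.sum_ite_eq]
    rw [this, List.sum_singleton, add_comm]

lemma invPresweepAux_presweep (m : ℕ) [NeZero m] (w : List (Fin m)) :
    invPresweepAux w.length (presweep m w) w.sum = some w.reverse := by
  induction w using List.reverseRecOn with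
  | nil => simp [invPresweepAux]
  | append_singleton v a ih =>
    have hlen : (v ++ [a]).length = v.length + 1 := by simp
    rw [hlen]
    have hP : presweep m (v ++ [a]) ((v ++ [a]).sum) = a :: presweep m v ((v ++ [a]).sum) := by
      rw [presweep_append]
      simp [List.sum_append]
    simp only [invPresweepAux, hP]
    have hupd : Function.update (presweep m (v ++ [a])) ((v ++ [a]).sum)
        (presweep m v ((v ++ [a]).sum)) = presweep m v := by
      funext k
      by_cases h : k = (v ++ [a]).sum
      · rw [h, Function.update_self]
      · rw [Function.update_of_ne h, presweep_append]
        have : ¬ (v.sum + a = k) := by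
          intro hc; apply h; rw [List.sum_append]; simp [← hc]
        simp [this]
    rw [hupd]
    have hsub : (v ++ [a]).sum - a = v.sum := by
      rw [List.sum_append]; simp
    rw [hsub, ih]
    simp

/-- The modular presweep map is injective on words of length N, and the
inverse modular presweep map (Algorithm 2) satisfies inverse_presweep ∘ presweep = id. -/
theorem presweep_injective_and_left_inverse (m N : ℕ) [NeZero m] :
    Set.InjOn (fun w => presweep m w) {w : List (Fin m) | w.length = N} ∧
    ∀ w : List (Fin m), w.length = N → invPresweep N (presweep m w) = some w := by
  have key : ∀ w : List (Fin m), w.length = N → invPresweep N (presweep m w) = some w := by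
    intro w hw
    unfold invPresweep
    rw [forget_sum, presweep_blocks_sum, ← hw, invPresweepAux_presweep]
    simp
  refine ⟨?_, key⟩
  intro w1 h1 w2 h2 heq
  simp only at heq
  have e1 := key w1 h1
  have e2 := key w2 h2
  rw [heq, e2] at e1
  exact (Option.some_inj.mp e1).symm
end

section
/- If m > Σ_j e_j·|a_j|, then the sweep map on A_Z agrees with the modular sweep map sweep_m after replacing each letter by its residue mod m: for every w ∈ A_Z, reducing sweep(w) letterwise mod m equals sweep_m applied to the letterwise mod-m reduction of w. -/
namespace SweepAux

open Fin.CommRing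

lemma natAbs_sum_le (l : List ℤ) : l.sum.natAbs ≤ (l.map Int.natAbs).sum := by
  induction l with
  | nil => simp
  | cons a t ih =>
      simp only [List.sum_cons, List.map_cons, List.sum_cons]
      exact le_trans (Int.natAbs_add_le a t.sum) (by omega)

lemma flatMap_filter_ne_nil {α β : Type*} (l : List α) (f : α → List β) :
    (l.filter (fun a => !(f a).isEmpty)).flatMap f = l.flatMap f := by
  induction l with
  | nil => simp
  | cons a t ih =>
      by_cases h : f a = [] <;> simp [List.filter_cons, h, ih]

lemma zlevel_natAbs_le (w : List ℤ) (j : ℕ) : (zlevel w j).natAbs ≤ (w.map Int.natAbs).sum := by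
  refine le_trans (natAbs_sum_le _) ?_
  exact List.Sublist.sum_le_sum ((List.take_sublist _ _).map _) (fun a _ => Nat.zero_le a)

lemma zlevel_sub_natAbs_le (w : List ℤ) (i j : ℕ) :
    (zlevel w i - zlevel w j).natAbs ≤ (w.map Int.natAbs).sum := by
  have aux : ∀ i j : ℕ, i ≤ j → (zlevel w j - zlevel w i).natAbs ≤ (w.map Int.natAbs).sum := by
    intro i j hij
    have h1 : w.take (j+1) = w.take (i+1) ++ (w.take (j+1)).drop (i+1) := by
      conv_lhs => rw [← List.take_append_drop (i+1) (w.take (j+1))]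
      rw [List.take_take, min_eq_left (by omega)]
    have h2 : zlevel w j = zlevel w i + ((w.take (j+1)).drop (i+1)).sum := by
      have h4 := congrArg List.sum h1
      rw [List.sum_append] at h4
      exact h4
    have h3 : ((((w.take (j+1)).drop (i+1))).map Int.natAbs).sum ≤ (w.map Int.natAbs).sum := by
      refine List.Sublist.sum_le_sum ?_ (fun a _ => Nat.zero_le a)
      exact ((List.drop_sublist _ _).trans (List.take_sublist _ _)).map _
    calc (zlevel w j - zlevel w i).natAbs
        = (((w.take (j+1)).drop (i+1)).sum).natAbs := by rw [h2, add_sub_cancel_left]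
      _ ≤ _ := le_trans (natAbs_sum_le _) h3
  rcases le_total j i with h | h
  · exact aux j i h
  · rw [← Int.natAbs_neg, neg_sub]; exact aux i j h

lemma fin_intCast_eq_iff (m : ℕ) [NeZero m] (x y : ℤ) :
    ((x : Fin m) = (y : Fin m)) ↔ (m : ℤ) ∣ x - y := by
  haveI := Fin.charP m
  rw [← sub_eq_zero, ← Int.cast_sub, CharP.intCast_eq_zero_iff (Fin m) m]

lemma fin_val_intCast_nonneg (m : ℕ) [NeZero m] (x : ℤ) (h0 : 0 ≤ x) (h : x < m) :
    ((x : Fin m) : ℕ) = x.toNat := by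
  have hx : x = (x.toNat : ℤ) := (Int.toNat_of_nonneg h0).symm
  conv_lhs => rw [hx]
  rw [Int.cast_natCast, Fin.val_cast_of_lt (by omega)]

lemma fin_val_intCast_neg (m : ℕ) [NeZero m] (x : ℤ) (h0 : -(m:ℤ) ≤ x) (h : x < 0) :
    ((x : Fin m) : ℕ) = (x + m).toNat := by
  have e : (x : Fin m) = ((x + m : ℤ) : Fin m) := by
    rw [fin_intCast_eq_iff]; exact ⟨-1, by ring⟩
  rw [e, fin_val_intCast_nonneg m _ (by omega) (by omega)]

lemma fin_cast_inj_of_small (m : ℕ) [NeZero m] (x y : ℤ)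
    (hb : (x - y).natAbs < m) (h : (x : Fin m) = (y : Fin m)) : x = y := by
  have hd : (m:ℤ) ∣ x - y := (fin_intCast_eq_iff m x y).mp h
  have hd' : m ∣ (x - y).natAbs := by
    rwa [← Int.natAbs_natCast m, Int.natAbs_dvd_natAbs]
  rcases Nat.eq_zero_or_pos (x - y).natAbs with h0 | h0
  · omega
  · have := Nat.le_of_dvd h0 hd'; omega

end SweepAux

open SweepAux in
open Fin.CommRing in
/-- If m > Σ_j e_j·|a_j|, then for every w ∈ A_ℤ the sweep map agrees with
the modular sweep map after reducing each letter mod m. -/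
theorem sweep_eq_modular_sweep (n : ℕ) (a : Fin n → ℤ) (e : Fin n → ℕ) (m : ℕ) [NeZero m]
    (hm : (∑ j : Fin n, e j * (a j).natAbs) < m)
    (w : List ℤ) (hw : w ∈ AZ n a e) :
    (zsweep w).map (fun x : ℤ => (x : Fin m)) =
      msweep m (w.map (fun x : ℤ => (x : Fin m))) := by
  classical
  -- Step 0: the total absolute sum is < m
  have hS : (w.map Int.natAbs).sum < m := by
    have h2 : ∀ s : Finset (Fin n),
        ((∑ j ∈ s, Multiset.replicate (e j) (a j)).map Int.natAbs).sum
          = ∑ j ∈ s, e j * (a j).natAbs := by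
      intro s
      induction s using Finset.induction_on with
      | empty => simp
      | insert _ _ h ih =>
          rw [Finset.sum_insert h, Finset.sum_insert h, Multiset.map_add, Multiset.sum_add,
            ih, Multiset.map_replicate, Multiset.sum_replicate, smul_eq_mul]
    have h1 : (w.map Int.natAbs).sum
        = ((w : Multiset ℤ).map Int.natAbs).sum := by simp
    have hw' : (w : Multiset ℤ) = ∑ j : Fin n, Multiset.replicate (e j) (a j) := hw
    rw [h1, hw', h2] at *
    exact lt_of_le_of_lt (le_of_eq rfl) hm
  -- notation
  have bool_ne_nil : ∀ {α : Type} (l : List α), ((!(l.isEmpty)) = true ↔ l ≠ []) := by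
    intro α l; cases l <;> simp
  have hcoeM : ∀ (l : List ℕ), (do let a ← l; pure ((a : ℤ)) : List ℤ)
      = l.map (fun t : ℕ => (t : ℤ)) := by
    intro l
    induction l with
    | nil => rfl
    | cons a t ih => simpa using ih
  have hkeys : sweepKeys w =
      ((List.range ((w.map Int.natAbs).sum)).map (fun t : ℕ => -((t : ℤ)+1))) ++
      ((List.range ((w.map Int.natAbs).sum + 1)).reverse.map (fun t : ℕ => (t : ℤ))) := by
    rw [sweepKeys, hcoeM, hcoeM, List.map_map, List.map_map]
    rfl
  -- Step 1: rewrite the LHS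
  have hL : (zsweep w).map (fun x : ℤ => (x : Fin m)) =
      (sweepKeys w).flatMap (fun k =>
        ((List.range w.length).reverse).filterMap (fun j =>
          if zlevel w j = k then some (((w.getD j 0 : ℤ) : Fin m)) else none)) := by
    rw [zsweep, List.map_flatMap]
    apply List.flatMap_congr
    intro k _
    rw [List.map_filterMap]
    apply List.filterMap_congr
    intro j _
    by_cases h : zlevel w j = k <;> simp [h]
  -- Step 2: rewrite the RHS
  have hR : msweep m (w.map (fun x : ℤ => (x : Fin m))) =
      ((List.range m).reverse).flatMap (fun k =>
        ((List.range w.length).reverse).filterMap (fun j =>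
          if (((zlevel w j : ℤ) : Fin m) : ℕ) = k then some (((w.getD j 0 : ℤ) : Fin m)) else none)) := by
    rw [msweep]
    simp only [List.length_map]
    apply List.flatMap_congr
    intro k _
    apply List.filterMap_congr
    intro j hj
    have hjN : j < w.length := by simpa using hj
    have hmod : modLevel m (w.map (fun x : ℤ => (x : Fin m))) j = ((zlevel w j : ℤ) : Fin m) := by
      show ((w.map (fun x : ℤ => (x : Fin m))).take (j+1)).sum = _
      rw [← List.map_take]
      exact (map_list_sum (Int.castRingHom (Fin m)) _).symm
    have hgd : (w.map (fun x : ℤ => (x : Fin m))).getD j 0 = ((w.getD j 0 : ℤ) : Fin m) := by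
      rw [List.getD_eq_getElem _ _ (by simpa using hjN), List.getD_eq_getElem _ _ hjN,
        List.getElem_map]
    rw [hmod, hgd]
  rw [hL, hR]
  set F : ℤ → List (Fin m) := fun k =>
    ((List.range w.length).reverse).filterMap (fun j =>
      if zlevel w j = k then some (((w.getD j 0 : ℤ) : Fin m)) else none) with hF
  set H : ℕ → List (Fin m) := fun k =>
    ((List.range w.length).reverse).filterMap (fun j =>
      if (((zlevel w j : ℤ) : Fin m) : ℕ) = k then some (((w.getD j 0 : ℤ) : Fin m)) else none) with hH
  -- nonemptiness criteria
  have hFne : ∀ k : ℤ, F k ≠ [] ↔ ∃ j, j < w.length ∧ zlevel w j = k := by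
    intro k
    simp only [hF, Ne, List.filterMap_eq_nil_iff]
    push_neg
    constructor
    · rintro ⟨j, hj, hne⟩
      refine ⟨j, by simpa using hj, ?_⟩
      by_contra hcon
      exact hne (if_neg hcon)
    · rintro ⟨j, hj, hz⟩
      exact ⟨j, by simpa using hj, by rw [if_pos hz]; simp⟩
  have hHne : ∀ k : ℕ, H k ≠ [] ↔ ∃ j, j < w.length ∧ (((zlevel w j : ℤ) : Fin m) : ℕ) = k := by
    intro k
    simp only [hH, Ne, List.filterMap_eq_nil_iff]
    push_neg
    constructor
    · rintro ⟨j, hj, hne⟩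
      refine ⟨j, by simpa using hj, ?_⟩
      by_contra hcon
      exact hne (if_neg hcon)
    · rintro ⟨j, hj, hz⟩
      exact ⟨j, by simpa using hj, by rw [if_pos hz]; simp⟩
  -- injectivity of reduction on levels
  have hinj : ∀ i j : ℕ, ((zlevel w i : ℤ) : Fin m) = ((zlevel w j : ℤ) : Fin m) →
      zlevel w i = zlevel w j := by
    intro i j h
    exact fin_cast_inj_of_small m _ _ (lt_of_le_of_lt (zlevel_sub_natAbs_le w i j) hS) h
  -- F at an occurring level agrees with H at its residue
  have hFH : ∀ ℓ : ℤ, (∃ j0, zlevel w j0 = ℓ) → F ℓ = H ((ℓ : Fin m) : ℕ) := by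
    rintro ℓ ⟨j0, rfl⟩
    simp only [hF, hH]
    apply List.filterMap_congr
    intro j _
    by_cases h : zlevel w j = zlevel w j0
    · rw [if_pos h, if_pos (by rw [h])]
    · rw [if_neg h, if_neg ?_]
      intro hval
      exact h (hinj j j0 (Fin.val_injective hval))
  -- membership in sweepKeys
  have hmemKeys : ∀ ℓ : ℤ, ℓ.natAbs ≤ (w.map Int.natAbs).sum → ℓ ∈ sweepKeys w := by
    intro ℓ hl
    rw [hkeys, List.mem_append]
    rcases lt_or_ge ℓ 0 with h | h
    · left
      simp only [List.mem_map, List.mem_range]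
      exact ⟨(-ℓ-1).toNat, by omega, by omega⟩
    · right
      simp only [List.mem_map, List.mem_reverse, List.mem_range]
      exact ⟨ℓ.toNat, by omega, by omega⟩
  -- the order relation of sweepKeys
  have hpw : (sweepKeys w).Pairwise (fun x y =>
      (x < 0 ∧ 0 ≤ y) ∨ (x < 0 ∧ y < 0 ∧ y < x) ∨ (0 ≤ x ∧ 0 ≤ y ∧ y < x)) := by
    rw [hkeys, List.pairwise_append]
    refine ⟨?_, ?_, ?_⟩
    · rw [List.pairwise_map]
      refine List.Pairwise.imp ?_ (List.pairwise_lt_range (n := _))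
      intro t t' h
      omega
    · rw [List.pairwise_map, List.pairwise_reverse]
      refine List.Pairwise.imp ?_ (List.pairwise_lt_range (n := _))
      intro t t' h
      omega
    · intro x hx y hy
      simp only [List.mem_map, List.mem_range] at hx
      simp only [List.mem_map, List.mem_reverse, List.mem_range] at hy
      obtain ⟨t, _, rfl⟩ := hx
      obtain ⟨t', _, rfl⟩ := hy
      omega
  -- sweepKeys has no duplicates
  have hndK : (sweepKeys w).Nodup := by
    rw [hkeys]
    refine List.Nodup.append ?_ ?_ ?_
    · refine List.Nodup.map ?_ (List.nodup_range (n := _))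
      intro t t' h
      have h' : -((t : ℤ)+1) = -((t' : ℤ)+1) := h
      omega
    · refine List.Nodup.map ?_ (List.nodup_reverse.mpr (List.nodup_range (n := _)))
      intro t t' h
      have h' : ((t : ℤ)) = ((t' : ℤ)) := h
      omega
    · intro x hx hy
      simp only [List.mem_map, List.mem_range] at hx
      simp only [List.mem_map, List.mem_reverse, List.mem_range] at hy
      obtain ⟨t, _, rfl⟩ := hx
      obtain ⟨t', _, h⟩ := hy
      omega
  -- occurring levels in the filtered key list
  have hocc : ∀ x ∈ (sweepKeys w).filter (fun ℓ => !(F ℓ).isEmpty),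
      ∃ j, j < w.length ∧ zlevel w j = x := by
    intro x hx
    rw [List.mem_filter] at hx
    exact (hFne x).mp ((bool_ne_nil _).mp hx.2)
  -- values of the residues of occurring levels
  have hvalr : ∀ x : ℤ, (∃ j0, zlevel w j0 = x) →
      ((0 ≤ x ∧ ((x : Fin m) : ℕ) = x.toNat) ∨ (x < 0 ∧ ((x : Fin m) : ℕ) = (x + m).toNat)) := by
    rintro x ⟨j0, rfl⟩
    have hb := zlevel_natAbs_le w j0
    rcases le_or_gt 0 (zlevel w j0) with h | h
    · refine Or.inl ⟨h, fin_val_intCast_nonneg m _ h ?_⟩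
      omega
    · refine Or.inr ⟨h, fin_val_intCast_neg m _ ?_ h⟩
      omega
  -- the central identity between key lists
  have hkey : ((sweepKeys w).filter (fun ℓ => !(F ℓ).isEmpty)).map (fun ℓ : ℤ => ((ℓ : Fin m) : ℕ))
      = ((List.range m).reverse).filter (fun k => !(H k).isEmpty) := by
    have hndL : (((sweepKeys w).filter (fun ℓ => !(F ℓ).isEmpty)).map
        (fun ℓ : ℤ => ((ℓ : Fin m) : ℕ))).Nodup := by
      refine List.Nodup.map_on ?_ (hndK.filter _)
      intro x hx y hy hxy
      obtain ⟨i, _, hix⟩ := hocc x hx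
      obtain ⟨j, _, hjy⟩ := hocc y hy
      rw [← hix, ← hjy] at hxy ⊢
      exact hinj i j (Fin.val_injective hxy)
    have hndR : (((List.range m).reverse).filter (fun k => !(H k).isEmpty)).Nodup :=
      (List.nodup_reverse.mpr (List.nodup_range (n := _))).filter _
    have hmemiff : ∀ k : ℕ,
        k ∈ ((sweepKeys w).filter (fun ℓ => !(F ℓ).isEmpty)).map (fun ℓ : ℤ => ((ℓ : Fin m) : ℕ)) ↔
        k ∈ ((List.range m).reverse).filter (fun k => !(H k).isEmpty) := by
      intro k
      simp only [List.mem_map, List.mem_filter, List.mem_reverse, List.mem_range]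
      constructor
      · rintro ⟨ℓ, ⟨hmem, hne⟩, rfl⟩
        obtain ⟨j, hj, rfl⟩ := (hFne ℓ).mp ((bool_ne_nil _).mp hne)
        exact ⟨Fin.is_lt _, (bool_ne_nil _).mpr ((hHne _).mpr ⟨j, hj, rfl⟩)⟩
      · rintro ⟨hk, hne⟩
        obtain ⟨j, hj, hk'⟩ := (hHne k).mp ((bool_ne_nil _).mp hne)
        refine ⟨zlevel w j, ⟨hmemKeys _ (zlevel_natAbs_le w j), ?_⟩, hk'⟩
        exact (bool_ne_nil _).mpr ((hFne _).mpr ⟨j, hj, rfl⟩)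
    have hsortL : (((sweepKeys w).filter (fun ℓ => !(F ℓ).isEmpty)).map
        (fun ℓ : ℤ => ((ℓ : Fin m) : ℕ))).Pairwise (· > ·) := by
      rw [List.pairwise_map]
      refine List.Pairwise.imp_of_mem ?_ (hpw.filter _)
      intro x y hx hy hRxy
      obtain ⟨i, _, hix⟩ := hocc x hx
      obtain ⟨j, _, hjy⟩ := hocc y hy
      have hbx : x.natAbs ≤ (w.map Int.natAbs).sum := hix ▸ zlevel_natAbs_le w i
      have hby : y.natAbs ≤ (w.map Int.natAbs).sum := hjy ▸ zlevel_natAbs_le w j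
      have hbxy : (x - y).natAbs ≤ (w.map Int.natAbs).sum := by
        rw [← hix, ← hjy]
        exact zlevel_sub_natAbs_le w i j
      have hvx := hvalr x ⟨i, hix⟩
      have hvy := hvalr y ⟨j, hjy⟩
      show ((y : Fin m) : ℕ) < ((x : Fin m) : ℕ)
      omega
    have hsortR : ((((List.range m).reverse).filter
        (fun k => !(H k).isEmpty))).Pairwise (· > ·) := by
      refine List.Pairwise.filter _ ?_
      rw [List.pairwise_reverse]
      exact List.pairwise_lt_range (n := m)
    haveI : IsAntisymm ℕ (· > ·) := ⟨fun _ _ h1 h2 => absurd h1 (Nat.lt_asymm h2)⟩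
    exact List.Perm.eq_of_pairwise (fun _ _ _ _ h1 h2 => absurd h1 (Nat.lt_asymm h2)) hsortL hsortR
      ((List.perm_ext_iff_of_nodup hndL hndR).mpr hmemiff)
  -- final assembly
  calc (sweepKeys w).flatMap F
      = ((sweepKeys w).filter (fun ℓ => !(F ℓ).isEmpty)).flatMap F :=
        (flatMap_filter_ne_nil _ _).symm
    _ = (((sweepKeys w).filter (fun ℓ => !(F ℓ).isEmpty)).map
          (fun ℓ : ℤ => ((ℓ : Fin m) : ℕ))).flatMap H := by
        rw [List.flatMap_map]
        apply List.flatMap_congr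
        intro ℓ hℓ
        obtain ⟨j, _, hj⟩ := hocc ℓ hℓ
        exact hFH ℓ ⟨j, hj⟩
    _ = (((List.range m).reverse).filter (fun k => !(H k).isEmpty)).flatMap H := by rw [hkey]
    _ = ((List.range m).reverse).flatMap H := flatMap_filter_ne_nil _ _
end
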